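/- Let y = y(x) be the formal power series satisfying y = 1 + x*y^(k+1), for a fixed positive integer k. Then for every nonnegative integer j and n ≥ 0, the coefficient of x^n in y^j equals (j/((k+1)n+j))*binom((k+1)n+j, n) (interpreting the value as 1 when n = 0 and j = 0). -/

import Mathlib

open PowerSeries

lemma aux_choose (k n j : ℕ) :
    ((j:ℚ)+1)/((k+1)*(n+1)+(j+1)) * ((((k+1)*(n+1)+(j+1)).choose (n+1)) : ℚ) =
    (j:ℚ)/((k+1)*(n+1)+j) * ((((k+1)*(n+1)+j).choose (n+1)) : ℚ) +
    ((k:ℚ)+1+j)/((k+1)*(n+1)+j) * ((((k+1)*(n+1)+j).choose n) : ℚ) := by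
  set M := (k+1)*(n+1)+j with hM
  have h1 : (M+1).choose (n+1) = M.choose n + M.choose (n+1) := Nat.choose_succ_succ M n
  have h2 : (M+1) * M.choose n = (M+1).choose (n+1) * (n+1) := Nat.add_one_mul_choose_eq M n
  have hcast : ((k+1)*(n+1)+(j+1) : ℕ) = M + 1 := by omega
  rw [hcast]
  have h1q : ((M+1).choose (n+1) : ℚ) = (M.choose n : ℚ) + (M.choose (n+1) : ℚ) := by
    exact_mod_cast congrArg (Nat.cast : ℕ → ℚ) h1
  have h2q : ((M:ℚ)+1) * (M.choose n : ℚ) = ((M.choose n : ℚ) + (M.choose (n+1) : ℚ)) * (n+1) := by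
    rw [← h1q]; exact_mod_cast congrArg (Nat.cast : ℕ → ℚ) h2
  have hMq : (M:ℚ) = ((k:ℚ)+1)*((n:ℚ)+1)+j := by rw [hM]; push_cast; ring
  rw [hMq] at h2q
  rw [h1q]
  have hA : ((k:ℚ)+1)*((n:ℚ)+1)+(j:ℚ) ≠ 0 := by positivity
  have hA1 : ((k:ℚ)+1)*((n:ℚ)+1)+((j:ℚ)+1) ≠ 0 := by positivity
  field_simp
  linear_combination (-(k:ℚ)-1) * h2q

/-- If `y` is the formal power series with constant term 1 satisfying `y = 1 + x y^(k+1)`,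
then `[x^n] y^j = (j/((k+1)n+j)) * binom((k+1)n+j, n)`, interpreted as 1 when `n = j = 0`. -/
theorem stmt_2 (k : ℕ) (hk : 0 < k) (y : PowerSeries ℚ)
    (hy : y = 1 + X * y ^ (k + 1)) :
    ∀ j n : ℕ,
      coeff n (y ^ j) =
        if n = 0 ∧ j = 0 then 1
        else ((j : ℚ) / ((k + 1) * n + j)) * (((k + 1) * n + j).choose n) := by
  have hy0 : constantCoeff y = 1 := by
    conv_lhs => rw [hy]
    simp
  intro j n
  induction n using Nat.strong_induction_on generalizing j with
  | _ n ih =>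
    induction j with
    | zero =>
      by_cases hn : n = 0
      · simp [hn]
      · simp [hn, coeff_one]
    | succ j ihj =>
      match n with
      | 0 =>
        have hc : coeff 0 (y ^ (j+1)) = 1 := by
          rw [coeff_zero_eq_constantCoeff, map_pow, hy0, one_pow]
        rw [hc, if_neg (by omega)]
        have hj1 : ((j:ℚ)+1) ≠ 0 := by positivity
        simp only [Nat.choose_zero_right, Nat.cast_zero, mul_zero, zero_add, Nat.cast_one,
          Nat.cast_add, Nat.cast_ofNat, mul_one]
        field_simp
      | Nat.succ m =>
        have hsplit : y ^ (j+1) = y ^ j + X * y ^ (k+1+j) := by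
          calc y^(j+1) = y^j * (1 + X * y^(k+1)) := by rw [← hy, pow_succ]
          _ = y^j + X * y^(k+1+j) := by ring
        rw [hsplit, map_add, coeff_succ_X_mul]
        simp only [Nat.succ_eq_add_one] at ihj ⊢
        rw [ihj, ih m (Nat.lt_succ_self m) (k+1+j)]
        have h1 : ¬(m + 1 = 0 ∧ j + 1 = 0) := by omega
        have h2 : ¬(m + 1 = 0 ∧ j = 0) := by omega
        have h3 : ¬(m = 0 ∧ k + 1 + j = 0) := by omega
        rw [if_neg h1, if_neg h2, if_neg h3]
        have harg : (k+1)*m + (k+1+j) = (k+1)*(m+1)+j := by ring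
        rw [harg]
        have hthis := aux_choose k m j
        push_cast at hthis ⊢
        linear_combination -hthis
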